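/- Let f* : [0,1]^d → ℝ with ‖f*‖_{H¹([0,1]^d; ℝ)} < ∞. Then there exist constants c, C > 0, depending only on d and ‖f*‖_{H¹([0,1]^d; ℝ)}, such that for every M ∈ ℕ there is a feedforward ReLU network f_NN ∈ F_NN(d, 1, L, W) with L ≤ c(1 + log M) and W ≤ c·M satisfying ‖f* − f_NN‖_{L^∞([0,1]^d)} ≤ C·M^{−1/d}. -/

import Mathlib

noncomputable section

open Real Set

/-- `ℝ^n` with the Euclidean norm. -/
abbrev Euc (n : ℕ) : Type := EuclideanSpace ℝ (Fin n)

/-- An affine layer `x ↦ A x + b`. -/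
def affineLayer {n m : ℕ} (A : Matrix (Fin m) (Fin n) ℝ) (b : Euc m) : Euc n → Euc m :=
  fun x => WithLp.toLp 2 (fun i => (∑ j, A i j * x j) + b i)

/-- Coordinatewise ReLU. -/
def reluV {n : ℕ} (x : Euc n) : Euc n := WithLp.toLp 2 (fun i => max (x i) 0)

/-- `IsFNNExact L din dout W f` : `f` is realized by a feedforward ReLU network with exactly
`L` hidden layers, input dimension `din`, output dimension `dout`, all hidden widths `≤ W`. -/
def IsFNNExact : (L : ℕ) → (din dout W : ℕ) → (Euc din → Euc dout) → Prop
  | 0, din, dout, _, f =>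
      ∃ (A : Matrix (Fin dout) (Fin din) ℝ) (b : Euc dout), f = affineLayer A b
  | L + 1, din, dout, W, f =>
      ∃ m : ℕ, m ≤ W ∧
        ∃ (A : Matrix (Fin m) (Fin din) ℝ) (b : Euc m) (g : Euc m → Euc dout),
          IsFNNExact L m dout W g ∧ f = g ∘ reluV ∘ affineLayer A b

/-- The class `F_NN(din, dout, L, W)`: depth at most `L`, width at most `W`. -/
def MemFNN (din dout L W : ℕ) (f : Euc din → Euc dout) : Prop :=
  ∃ L' ≤ L, IsFNNExact L' din dout W f

/-- Membership in `F_NN(din, dout, L, W)` with real-valued size bounds. -/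
def MemFNNR (din dout : ℕ) (L W : ℝ) (f : Euc din → Euc dout) : Prop :=
  ∃ L' W' : ℕ, (L' : ℝ) ≤ L ∧ (W' : ℝ) ≤ W ∧ IsFNNExact L' din dout W' f

/-- The latent cube `Z([a,b]) = [0,1]^d × [a,b] ⊆ ℝ^{d+1}`. -/
def Zcube (d : ℕ) (a b : ℝ) : Set (Euc (d + 1)) :=
  {z | (∀ i : Fin d, z i.castSucc ∈ Icc (0 : ℝ) 1) ∧ z (Fin.last d) ∈ Icc a b}

/-- Reach of a subset of Euclidean space. -/
def reach {n : ℕ} (M : Set (Euc n)) : ℝ :=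
  sInf {r : ℝ | 0 < r ∧ ∃ x ∈ M, ∃ y ∈ M, x ≠ y ∧ ∃ v : Euc n,
    r = ‖x - v‖ ∧ r = ‖y - v‖ ∧ r = Metric.infDist v M}

/-- The states at time `t`: `M(t) = F(M(0), t)`. -/
def Mt {D : ℕ} (F : Euc D → ℝ → Euc D) (M0 : Set (Euc D)) (t : ℝ) : Set (Euc D) :=
  (fun x => F x t) '' M0

/-- `M([a,b]) = ⋃_{t ∈ [a,b]} M(t)`. -/
def Mab {D : ℕ} (F : Euc D → ℝ → Euc D) (M0 : Set (Euc D)) (a b : ℝ) : Set (Euc D) :=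
  ⋃ t ∈ Icc a b, Mt F M0 t

/-- The windowed composition `(T^{i} ∘ (P^{i})^{∘𝐓_i}) ∘ ⋯ ∘ (T^{1} ∘ (P^{1})^{∘𝐓_1})`
(0-indexed), where `𝐓_j = κ(j+1) − κ(j)`. -/
def weldChain {α : Type*} (P Tc : ℕ → α → α) (κ : ℕ → ℕ) : ℕ → α → α
  | 0 => id
  | j + 1 => (Tc j) ∘ (P j)^[κ (j + 1) - κ j] ∘ weldChain P Tc κ j

/-- The unit cube `[0,1]^d ⊆ ℝ^d`. -/
def unitCube (d : ℕ) : Set (Euc d) := {x | ∀ i, x i ∈ Icc (0 : ℝ) 1}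

/-- Affine real-valued function on `Euc n`. -/
def Aff (n : ℕ) (u : Euc n → ℝ) : Prop :=
  ∃ (A : Fin n → ℝ) (b : ℝ), ∀ x, u x = (∑ j, A j * x j) + b

lemma aff_const {n : ℕ} (r : ℝ) : Aff n (fun _ => r) :=
  ⟨fun _ => 0, r, fun x => by simp⟩

lemma aff_coord {n : ℕ} (i : Fin n) : Aff n (fun x => x i) :=
  ⟨fun j => if j = i then 1 else 0, 0, fun x => by simp [ite_mul]⟩

lemma aff_add {n : ℕ} {u v : Euc n → ℝ} (hu : Aff n u) (hv : Aff n v) :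
    Aff n (fun x => u x + v x) := by
  obtain ⟨A, a, hA⟩ := hu; obtain ⟨B, c, hB⟩ := hv
  refine ⟨fun j => A j + B j, a + c, fun x => ?_⟩
  show u x + v x = _
  have h : ∑ j, (A j + B j) * x j = (∑ j, A j * x j) + ∑ j, B j * x j := by
    rw [← Finset.sum_add_distrib]; exact Finset.sum_congr rfl fun j _ => by ring
  rw [hA, hB, h]; ring

lemma aff_sub {n : ℕ} {u v : Euc n → ℝ} (hu : Aff n u) (hv : Aff n v) :
    Aff n (fun x => u x - v x) := by
  obtain ⟨A, a, hA⟩ := hu; obtain ⟨B, c, hB⟩ := hv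
  refine ⟨fun j => A j - B j, a - c, fun x => ?_⟩
  show u x - v x = _
  have h : ∑ j, (A j - B j) * x j = (∑ j, A j * x j) - ∑ j, B j * x j := by
    rw [← Finset.sum_sub_distrib]; exact Finset.sum_congr rfl fun j _ => by ring
  rw [hA, hB, h]; ring

lemma isFNNExact_mono : ∀ (L : ℕ) {din dout W W' : ℕ}, W ≤ W' →
    ∀ {f : Euc din → Euc dout}, IsFNNExact L din dout W f → IsFNNExact L din dout W' f := by
  intro L
  induction L with
  | zero => intro din dout W W' _ f h; exact h
  | succ L ih =>
    rintro din dout W W' hW f ⟨m, hm, A, b, g, hg, rfl⟩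
    exact ⟨m, hm.trans hW, A, b, g, ih hW hg, rfl⟩

lemma layer_exists {din m : ℕ} (w : Fin m → Euc din → ℝ) (hw : ∀ t, Aff din (w t)) :
    ∃ (A : Matrix (Fin m) (Fin din) ℝ) (b : Euc m), ∀ x t, affineLayer A b x t = w t x := by
  choose A b h using hw
  exact ⟨fun t j => A t j, WithLp.toLp 2 (fun t => b t), fun x t => (h t x).symm⟩

lemma max_zero_add_neg (a : ℝ) : max a 0 + max (-a) 0 = |a| := by
  rcases le_total 0 a with h | h
  · rw [max_eq_left h, max_eq_right (neg_nonpos.mpr h), add_zero, abs_of_nonneg h]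
  · rw [max_eq_right h, max_eq_left (neg_nonneg.mpr h), zero_add, abs_of_nonpos h]

lemma max_formula (a b : ℝ) : max (a - b) 0 + max b 0 - max (-b) 0 = max a b := by
  have hb : max b 0 - max (-b) 0 = b := by
    rcases le_total 0 b with h | h
    · rw [max_eq_left h, max_eq_right (neg_nonpos.mpr h), sub_zero]
    · rw [max_eq_right h, max_eq_left (neg_nonneg.mpr h), zero_sub, neg_neg]
  have h2 : max (a - b) 0 + max b 0 - max (-b) 0 = max (a-b) 0 + (max b 0 - max (-b) 0) := by ring
  rw [h2, hb, ← max_add_add_right (a-b) 0 b]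
  congr 1 <;> ring

lemma euc_norm_le_sum_abs {n : ℕ} (y : Euc n) : ‖y‖ ≤ ∑ i, |y i| := by
  rw [EuclideanSpace.norm_eq]
  have h0 : 0 ≤ ∑ i, |y i| := Finset.sum_nonneg fun i _ => abs_nonneg _
  refine (Real.sqrt_le_sqrt ?_).trans_eq (Real.sqrt_sq h0)
  have h1 : ∀ i ∈ Finset.univ, ‖y i‖ ^ 2 ≤ |y i| * ∑ j, |y j| := by
    intro i _
    rw [Real.norm_eq_abs, sq]
    exact mul_le_mul_of_nonneg_left
      (Finset.single_le_sum (fun j _ => abs_nonneg (y j)) (Finset.mem_univ i)) (abs_nonneg _)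
  calc ∑ i, ‖y i‖ ^ 2 ≤ ∑ i, |y i| * ∑ j, |y j| := Finset.sum_le_sum h1
    _ = (∑ i, |y i|) ^ 2 := by rw [← Finset.sum_mul, sq]

lemma maxNet : ∀ m : ℕ, ∀ n : ℕ, ∀ u : Fin m → Euc n → ℝ,
    ∀ H : (Finset.univ : Finset (Fin m)).Nonempty, (∀ j, Aff n (u j)) →
    ∃ f : Euc n → Euc 1, IsFNNExact (Nat.clog 2 m) n 1 (3 * m) f ∧
      ∀ x, f x 0 = Finset.univ.sup' H fun j => u j x := by
  intro m
  induction m using Nat.strong_induction_on with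
  | _ m ih =>
  intro n u H hu
  match m, u, H, hu, ih with
  | 0, u, H, hu, ih => exact absurd H (by simp)
  | 1, u, H, hu, ih =>
    obtain ⟨A0, b0, hA0⟩ := hu 0
    refine ⟨affineLayer (fun (_ : Fin 1) j => A0 j) (WithLp.toLp 2 (fun _ => b0)), ?_, ?_⟩
    · rw [Nat.clog_one_right]
      exact ⟨_, _, rfl⟩
    · intro x
      have h1 : affineLayer (fun (_ : Fin 1) j => A0 j) (WithLp.toLp 2 (fun _ => b0)) x 0 = u 0 x := by
        rw [hA0]; rfl
      rw [h1]
      exact le_antisymm (Finset.le_sup' (fun j => u j x) (Finset.mem_univ (0 : Fin 1)))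
        (Finset.sup'_le _ _ fun j _ => le_of_eq (by rw [Subsingleton.elim j 0]))
  | (m + 2), u, H, hu, ih =>
    set q := (m + 3) / 2 with hqdef
    have hq1 : 1 ≤ q := by omega
    have hql : q < m + 2 := by omega
    set i1 : Fin q → Fin (m + 2) := fun j => ⟨2 * j.1, by have := j.2; omega⟩ with hi1
    set i2 : Fin q → Fin (m + 2) :=
      fun j => ⟨min (2 * j.1 + 1) (m + 1), by omega⟩ with hi2
    set jof : Fin (3 * q) → Fin q := fun t => ⟨t.1 / 3, by have := t.2; omega⟩ with hjof
    set w : Fin (3 * q) → Euc n → ℝ := fun t x =>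
      if t.1 % 3 = 0 then u (i1 (jof t)) x - u (i2 (jof t)) x
      else if t.1 % 3 = 1 then u (i2 (jof t)) x
      else 0 - u (i2 (jof t)) x with hwdef
    have hw : ∀ t, Aff n (w t) := by
      intro t; rw [hwdef]; dsimp only
      split
      · exact aff_sub (hu _) (hu _)
      · split
        · exact hu _
        · exact aff_sub (aff_const 0) (hu _)
    obtain ⟨A, b, hAb⟩ := layer_exists w hw
    set u' : Fin q → Euc (3 * q) → ℝ := fun j y =>
      y ⟨3 * j.1, by have := j.2; omega⟩ + y ⟨3 * j.1 + 1, by have := j.2; omega⟩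
        - y ⟨3 * j.1 + 2, by have := j.2; omega⟩ with hu'def
    have hu' : ∀ j, Aff (3 * q) (u' j) :=
      fun j => aff_sub (aff_add (aff_coord _) (aff_coord _)) (aff_coord _)
    have H' : (Finset.univ : Finset (Fin q)).Nonempty := ⟨⟨0, hq1⟩, Finset.mem_univ _⟩
    obtain ⟨g, hg, hgv⟩ := ih q hql (3 * q) u' H' hu'
    refine ⟨g ∘ reluV ∘ affineLayer A b, ?_, ?_⟩
    · have hclog : Nat.clog 2 (m + 2) = Nat.clog 2 q + 1 := by
        rw [Nat.clog_of_two_le (by norm_num) (by omega)]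
        congr 1
      rw [hclog]
      exact ⟨3 * q, by omega, A, b, g, isFNNExact_mono _ (by omega) hg, rfl⟩
    · intro x
      set y : Euc (3 * q) := reluV (affineLayer A b x) with hy
      have hyt : ∀ t, y t = max (w t x) 0 := by
        intro t
        show max (affineLayer A b x t) 0 = _
        rw [hAb]
      have hu'v : ∀ j : Fin q, u' j y = max (u (i1 j) x) (u (i2 j) x) := by
        intro j
        have hj := j.2
        have e0 : y ⟨3 * j.1, by omega⟩ = max (u (i1 j) x - u (i2 j) x) 0 := by
          rw [hyt, hwdef]
          have hm0 : (3 * j.1) % 3 = 0 := by omega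
          have hjj : jof ⟨3 * j.1, by omega⟩ = j := by
            rw [hjof]; exact Fin.ext (by show 3 * j.1 / 3 = j.1; omega)
          simp [hm0, hjj]
        have e1 : y ⟨3 * j.1 + 1, by omega⟩ = max (u (i2 j) x) 0 := by
          rw [hyt, hwdef]
          have hm0 : (3 * j.1 + 1) % 3 = 1 := by omega
          have hjj : jof ⟨3 * j.1 + 1, by omega⟩ = j := by
            rw [hjof]; exact Fin.ext (by show (3 * j.1 + 1) / 3 = j.1; omega)
          simp [hm0, hjj]
        have e2 : y ⟨3 * j.1 + 2, by omega⟩ = max (-(u (i2 j) x)) 0 := by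
          rw [hyt, hwdef]
          have hm0 : (3 * j.1 + 2) % 3 = 2 := by omega
          have hjj : jof ⟨3 * j.1 + 2, by omega⟩ = j := by
            rw [hjof]; exact Fin.ext (by show (3 * j.1 + 2) / 3 = j.1; omega)
          simp [hm0, hjj]
        rw [hu'def]
        dsimp only
        rw [e0, e1, e2, max_formula]
      show g y 0 = _
      rw [hgv y]
      refine le_antisymm ?_ ?_
      · refine Finset.sup'_le _ _ fun j _ => ?_
        rw [hu'v j]
        exact max_le (Finset.le_sup' (fun k => u k x) (Finset.mem_univ (i1 j)))
          (Finset.le_sup' (fun k => u k x) (Finset.mem_univ (i2 j)))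
      · refine Finset.sup'_le _ _ fun i _ => ?_
        have hi := i.2
        have hj : i.1 / 2 < q := by omega
        refine le_trans ?_ (Finset.le_sup' (fun j => u' j y) (Finset.mem_univ ⟨i.1 / 2, hj⟩))
        rw [hu'v]
        rcases (by omega : i.1 % 2 = 0 ∨ i.1 % 2 = 1) with h | h
        · have he : i1 ⟨i.1 / 2, hj⟩ = i := by
            rw [hi1]; exact Fin.ext (by show 2 * (i.1 / 2) = i.1; omega)
          rw [he]
          exact le_max_left _ _
        · have he : i2 ⟨i.1 / 2, hj⟩ = i := by
            rw [hi2]; exact Fin.ext (by show min (2 * (i.1 / 2) + 1) (m + 1) = i.1; omega)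
          rw [he]
          exact le_max_right _ _

lemma build (d : ℕ) (fstar : Euc d → ℝ) (K : ℝ) (hK : 0 ≤ K)
    (hlip : ∀ x ∈ unitCube d, ∀ y ∈ unitCube d, |fstar x - fstar y| ≤ K * ‖x - y‖)
    (N : ℕ) (hN : 0 < N) :
    ∃ f : Euc d → Euc 1,
      IsFNNExact (Nat.clog 2 ((N + 1) ^ d) + 1) d 1
        (max (d * ((N + 1) * 2)) (3 * (N + 1) ^ d)) f ∧
      ∀ x ∈ unitCube d, |fstar x - f x 0| ≤ 2 * K * d / N := by
  classical
  have hNR : (0 : ℝ) < N := by exact_mod_cast hN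
  set n1 := d * ((N + 1) * 2) with hn1
  have hcard1 : Fintype.card (Fin d × Fin (N + 1) × Fin 2) = n1 := by
    simp [hn1]
  set e := Fintype.equivFinOfCardEq hcard1 with he
  set m' := (N + 1) ^ d with hm'
  have hcard2 : Fintype.card (Fin d → Fin (N + 1)) = m' := by
    simp [hm', Fintype.card_fun]
  set eg := Fintype.equivFinOfCardEq hcard2 with heg
  set pt : (Fin d → Fin (N + 1)) → Euc d := fun p => WithLp.toLp 2 (fun i => (p i : ℝ) / N) with hpt
  have hptc : ∀ p, pt p ∈ unitCube d := by
    intro p i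
    constructor
    · positivity
    · rw [div_le_one hNR]
      exact_mod_cast Nat.lt_succ_iff.mp (p i).2
  set w : Fin n1 → Euc d → ℝ := fun t x =>
    if (e.symm t).2.2 = 0 then x (e.symm t).1 - ((e.symm t).2.1 : ℝ) / N
    else ((e.symm t).2.1 : ℝ) / N - x (e.symm t).1 with hwdef
  have hw : ∀ t, Aff d (w t) := by
    intro t; rw [hwdef]; dsimp only
    split
    · exact aff_sub (aff_coord _) (aff_const _)
    · exact aff_sub (aff_const _) (aff_coord _)
  obtain ⟨A, b, hAb⟩ := layer_exists w hw
  set U : Fin m' → Euc n1 → ℝ := fun k y =>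
    (∑ t, (if (e.symm t).2.1 = (eg.symm k) (e.symm t).1 then -K else 0) * y t)
      + fstar (pt (eg.symm k)) with hUdef
  have hU : ∀ k, Aff n1 (U k) := fun k => ⟨_, _, fun y => rfl⟩
  have hm'pos : 0 < m' := pow_pos (Nat.succ_pos N) d
  have H : (Finset.univ : Finset (Fin m')).Nonempty := ⟨⟨0, hm'pos⟩, Finset.mem_univ _⟩
  obtain ⟨f2, hf2, hf2v⟩ := maxNet m' n1 U H hU
  refine ⟨f2 ∘ reluV ∘ affineLayer A b, ?_, ?_⟩
  · exact ⟨n1, le_max_left _ _, A, b, f2, isFNNExact_mono _ (le_max_right _ _) hf2, rfl⟩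
  · intro x hx
    set y := reluV (affineLayer A b x) with hy
    have hyt : ∀ t, y t = max (w t x) 0 := by
      intro t
      show max (affineLayer A b x t) 0 = _
      rw [hAb]
    have keyT : ∀ k : Fin m', U k y =
        fstar (pt (eg.symm k)) - K * ∑ i, |x i - ((eg.symm k i : ℕ) : ℝ) / N| := by
      intro k
      set p := eg.symm k with hp
      have hsum : (∑ t, (if (e.symm t).2.1 = p (e.symm t).1 then -K else 0) * y t)
          = -K * ∑ i, |x i - ((p i : ℕ) : ℝ) / N| := by
        set F : Fin d × Fin (N + 1) × Fin 2 → ℝ := fun z =>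
            (if z.2.1 = p z.1 then -K else 0) *
              max (if z.2.2 = 0 then x z.1 - ((z.2.1 : ℕ) : ℝ) / N
                   else ((z.2.1 : ℕ) : ℝ) / N - x z.1) 0 with hF
        have h1 : ∀ t : Fin n1, (if (e.symm t).2.1 = p (e.symm t).1 then -K else 0) * y t
            = F (e.symm t) := by
          intro t
          rw [hyt t, hwdef, hF]
        rw [Finset.sum_congr rfl (fun t _ => h1 t), Equiv.sum_comp e.symm F]
        rw [Fintype.sum_prod_type]
        simp only [hF]
        have h2 : ∀ i : Fin d,
            (∑ v : Fin (N + 1) × Fin 2, (if v.1 = p i then -K else 0) *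
              max (if v.2 = 0 then x i - ((v.1 : ℕ) : ℝ) / N
                   else ((v.1 : ℕ) : ℝ) / N - x i) 0)
            = -K * |x i - ((p i : ℕ) : ℝ) / N| := by
          intro i
          rw [Fintype.sum_prod_type]
          have h3 : ∀ j : Fin (N + 1),
              (∑ s : Fin 2, (if j = p i then -K else 0) *
                max (if s = 0 then x i - ((j : ℕ) : ℝ) / N
                     else ((j : ℕ) : ℝ) / N - x i) 0)
              = if j = p i then -K * |x i - ((j : ℕ) : ℝ) / N| else 0 := by
            intro j
            rw [Fin.sum_univ_two]
            have hs0 : (if (0 : Fin 2) = 0 then x i - ((j : ℕ) : ℝ) / N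
                else ((j : ℕ) : ℝ) / N - x i) = x i - ((j : ℕ) : ℝ) / N := if_pos rfl
            have hs1 : (if (1 : Fin 2) = 0 then x i - ((j : ℕ) : ℝ) / N
                else ((j : ℕ) : ℝ) / N - x i) = -(x i - ((j : ℕ) : ℝ) / N) := by
              rw [if_neg (by decide)]; ring
            rw [hs0, hs1, ← mul_add, max_zero_add_neg, ite_mul, zero_mul]
          rw [Finset.sum_congr rfl (fun j _ => h3 j), Finset.sum_ite_eq' Finset.univ (p i)]
          simp
        rw [Finset.sum_congr rfl (fun i _ => h2 i), ← Finset.mul_sum]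
      rw [hUdef]
      dsimp only
      rw [hsum]
      ring
    have hfx : (f2 ∘ reluV ∘ affineLayer A b) x 0
        = Finset.univ.sup' H (fun k =>
            fstar (pt (eg.symm k)) - K * ∑ i, |x i - ((eg.symm k i : ℕ) : ℝ) / N|) := by
      show f2 y 0 = _
      rw [hf2v y]
      exact Finset.sup'_congr H rfl (fun k _ => keyT k)
    rw [hfx]
    -- upper bound : every term is at most fstar x
    have hub : Finset.univ.sup' H (fun k =>
        fstar (pt (eg.symm k)) - K * ∑ i, |x i - ((eg.symm k i : ℕ) : ℝ) / N|) ≤ fstar x := by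
      refine Finset.sup'_le _ _ fun k _ => ?_
      set p := eg.symm k with hp
      have h2 := hlip (pt p) (hptc p) x hx
      have h3 : ‖pt p - x‖ ≤ ∑ i, |x i - ((p i : ℕ) : ℝ) / N| := by
        refine (euc_norm_le_sum_abs _).trans (le_of_eq ?_)
        refine Finset.sum_congr rfl fun i _ => ?_
        rw [PiLp.sub_apply, abs_sub_comm]
      have h4 : fstar (pt p) - fstar x ≤ K * ∑ i, |x i - ((p i : ℕ) : ℝ) / N| :=
        (le_abs_self _).trans (h2.trans (mul_le_mul_of_nonneg_left h3 hK))
      linarith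
    -- lower bound via nearest grid point
    have hfloorle : ∀ i : Fin d, ⌊(N : ℝ) * x i⌋₊ < N + 1 := by
      intro i
      have hle : (N : ℝ) * x i ≤ (N : ℝ) := by
        nlinarith [(hx i).2, (hx i).1]
      have := Nat.floor_le_floor hle
      rw [Nat.floor_natCast] at this
      omega
    set pstar : Fin d → Fin (N + 1) := fun i => ⟨⌊(N : ℝ) * x i⌋₊, hfloorle i⟩ with hps
    have hnear : ∀ i : Fin d, |x i - ((pstar i : ℕ) : ℝ) / N| ≤ 1 / N := by
      intro i
      have h0 : 0 ≤ (N : ℝ) * x i := mul_nonneg hNR.le (hx i).1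
      have hfl : ((⌊(N : ℝ) * x i⌋₊ : ℕ) : ℝ) ≤ (N : ℝ) * x i := Nat.floor_le h0
      have hfu : (N : ℝ) * x i < (⌊(N : ℝ) * x i⌋₊ : ℝ) + 1 := Nat.lt_floor_add_one _
      have hnn : 0 ≤ x i - ((pstar i : ℕ) : ℝ) / N := by
        rw [hps, sub_nonneg, div_le_iff₀ hNR]
        dsimp only
        nlinarith
      rw [abs_of_nonneg hnn, hps]
      dsimp only
      rw [sub_le_iff_le_add]
      have heq : 1 / (N : ℝ) + ((⌊(N : ℝ) * x i⌋₊ : ℕ) : ℝ) / N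
          = (((⌊(N : ℝ) * x i⌋₊ : ℕ) : ℝ) + 1) / N := by ring
      rw [heq, le_div_iff₀ hNR]
      nlinarith
    have hTstar : ∑ i, |x i - ((pstar i : ℕ) : ℝ) / N| ≤ d / N := by
      calc ∑ i, |x i - ((pstar i : ℕ) : ℝ) / N| ≤ ∑ _i : Fin d, 1 / (N : ℝ) :=
            Finset.sum_le_sum fun i _ => hnear i
        _ = d * (1 / (N : ℝ)) := by
            rw [Finset.sum_const, Finset.card_univ, Fintype.card_fin, nsmul_eq_mul]
        _ = d / N := by ring
    have hlb : fstar x - 2 * K * d / N ≤ Finset.univ.sup' H (fun k =>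
        fstar (pt (eg.symm k)) - K * ∑ i, |x i - ((eg.symm k i : ℕ) : ℝ) / N|) := by
      refine le_trans ?_ (Finset.le_sup' (fun k =>
        fstar (pt (eg.symm k)) - K * ∑ i, |x i - ((eg.symm k i : ℕ) : ℝ) / N|)
        (Finset.mem_univ (eg pstar)))
      simp only [Equiv.symm_apply_apply]
      have h2 := hlip x hx (pt pstar) (hptc pstar)
      have h3 : ‖x - pt pstar‖ ≤ ∑ i, |x i - ((pstar i : ℕ) : ℝ) / N| := by
        refine (euc_norm_le_sum_abs _).trans (le_of_eq ?_)
        refine Finset.sum_congr rfl fun i _ => ?_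
        rw [PiLp.sub_apply]
      have h4 : fstar x - fstar (pt pstar) ≤ K * (d / N) :=
        (le_abs_self _).trans (h2.trans (by
          refine le_trans (mul_le_mul_of_nonneg_left h3 hK) ?_
          exact mul_le_mul_of_nonneg_left hTstar hK))
      have h5 : K * ∑ i, |x i - ((pstar i : ℕ) : ℝ) / N| ≤ K * (d / N) :=
        mul_le_mul_of_nonneg_left hTstar hK
      have heq2 : 2 * K * (d : ℝ) / N = K * ((d : ℝ) / N) + K * ((d : ℝ) / N) := by ring
      linarith
    have h2Kd : 0 ≤ 2 * K * (d : ℝ) / N := by positivity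
    rw [abs_sub_le_iff]
    constructor
    · linarith
    · linarith

/-- Let `f* : [0,1]^d → ℝ` with finite 1-Hölder norm `K` (that is,
`|f*| ≤ K` and `f*` is `K`-Lipschitz on `[0,1]^d`).  Then there are constants `c, C > 0`
(depending only on `d` and the Hölder norm) such that for every `M ∈ ℕ`, `M ≥ 1`, there is a
feedforward ReLU network `f_NN ∈ F_NN(d, 1, L, W)` with `L ≤ c(1 + log M)`, `W ≤ c·M` and
`‖f* − f_NN‖_{L^∞([0,1]^d)} ≤ C·M^{−1/d}`. -/
theorem lipschitz_approx_scalar (d : ℕ) (hd : 0 < d) (fstar : Euc d → ℝ) (K : ℝ)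
    (hbd : ∀ x ∈ unitCube d, |fstar x| ≤ K)
    (hlip : ∀ x ∈ unitCube d, ∀ y ∈ unitCube d, |fstar x - fstar y| ≤ K * ‖x - y‖) :
    ∃ c C : ℝ, 0 < c ∧ 0 < C ∧ ∀ M : ℕ, 1 ≤ M →
      ∃ (L W : ℕ) (f : Euc d → Euc 1),
        (L : ℝ) ≤ c * (1 + Real.log M) ∧ (W : ℝ) ≤ c * M ∧
        MemFNN d 1 L W f ∧
        ∀ x ∈ unitCube d, |fstar x - f x 0| ≤ C * (M : ℝ) ^ (-(1 / (d : ℝ))) := by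
  have h0cube : (0 : Euc d) ∈ unitCube d := by
    intro i
    constructor <;> simp
  have hK : 0 ≤ K := (abs_nonneg _).trans (hbd 0 h0cube)
  have hdR : (1 : ℝ) ≤ (d : ℝ) := by exact_mod_cast hd
  have hdR0 : (0 : ℝ) < (d : ℝ) := by linarith
  refine ⟨(3 : ℝ) ^ (d + 1) + 6 * d + 4, 2 * K * d + 1, ?_, ?_, ?_⟩
  · positivity
  · positivity
  intro M hM
  set c : ℝ := (3 : ℝ) ^ (d + 1) + 6 * d + 4 with hc
  have hM1 : (1 : ℝ) ≤ (M : ℝ) := by exact_mod_cast hM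
  have hM0 : (0 : ℝ) < (M : ℝ) := by linarith
  set α : ℝ := (M : ℝ) ^ ((1 : ℝ) / d) with hα
  have hα1 : 1 ≤ α := by
    rw [hα]
    calc (1 : ℝ) = (1 : ℝ) ^ ((1 : ℝ) / d) := (Real.one_rpow _).symm
      _ ≤ (M : ℝ) ^ ((1 : ℝ) / d) := Real.rpow_le_rpow zero_le_one hM1 (by positivity)
  have hα0 : 0 < α := by linarith
  have hαM : α ≤ (M : ℝ) := by
    rw [hα]
    calc (M : ℝ) ^ ((1 : ℝ) / d) ≤ (M : ℝ) ^ (1 : ℝ) :=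
          Real.rpow_le_rpow_of_exponent_le hM1 (by
            rw [div_le_one hdR0]; exact hdR)
      _ = (M : ℝ) := Real.rpow_one _
  set N : ℕ := ⌈α⌉₊ with hNdef
  have hN1 : 1 ≤ N := Nat.one_le_ceil_iff.mpr hα0
  have hNα : α ≤ (N : ℝ) := Nat.le_ceil α
  have hNup : (N : ℝ) ≤ α + 1 := (Nat.ceil_lt_add_one hα0.le).le
  have hN3α : ((N : ℝ) + 1) ≤ 3 * α := by linarith
  have hNR : (0 : ℝ) < N := by
    have : (1 : ℝ) ≤ (N : ℝ) := by exact_mod_cast hN1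
    linarith
  have hαd : α ^ d = (M : ℝ) := by
    rw [hα, ← Real.rpow_natCast ((M : ℝ) ^ ((1 : ℝ) / d)) d, ← Real.rpow_mul hM0.le]
    rw [show (1 : ℝ) / d * d = 1 by field_simp]
    exact Real.rpow_one _
  obtain ⟨f, hfe, herr⟩ := build d fstar K hK hlip N (by omega)
  refine ⟨Nat.clog 2 ((N + 1) ^ d) + 1, max (d * ((N + 1) * 2)) (3 * (N + 1) ^ d), f,
    ?_, ?_, ⟨_, le_refl _, hfe⟩, ?_⟩
  · -- depth bound
    have hlogM : 0 ≤ Real.log M := Real.log_nonneg hM1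
    set P := (N + 1) ^ d with hP
    have hP2 : 2 ≤ P := by
      calc 2 = 2 ^ 1 := rfl
        _ ≤ 2 ^ d := Nat.pow_le_pow_right (by norm_num) hd
        _ ≤ (N + 1) ^ d := Nat.pow_le_pow_left (by omega) d
    have hclogpos : 0 < Nat.clog 2 P := Nat.clog_pos (by norm_num) hP2
    have hpow : 2 ^ (Nat.clog 2 P - 1) < P := Nat.pow_pred_clog_lt_self (by norm_num) (by omega)
    have hpowR : ((Nat.clog 2 P - 1 : ℕ) : ℝ) * Real.log 2 ≤ Real.log P := by
      rw [← Real.log_pow]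
      refine Real.log_le_log (by positivity) ?_
      exact_mod_cast hpow.le
    have hcast : ((Nat.clog 2 P - 1 : ℕ) : ℝ) = (Nat.clog 2 P : ℝ) - 1 := by
      rw [Nat.cast_sub hclogpos, Nat.cast_one]
    have hlog2 : (1 : ℝ) / 2 ≤ Real.log 2 := by
      have := Real.log_two_gt_d9
      linarith
    have hlogP : Real.log P = d * Real.log ((N : ℝ) + 1) := by
      rw [hP]
      push_cast
      rw [Real.log_pow]
    have hlogN : Real.log ((N : ℝ) + 1) ≤ 2 + (1 / d) * Real.log M := by
      calc Real.log ((N : ℝ) + 1) ≤ Real.log (3 * α) :=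
            Real.log_le_log (by positivity) hN3α
        _ = Real.log 3 + Real.log α := Real.log_mul (by norm_num) (by positivity)
        _ ≤ 2 + (1 / d) * Real.log M := by
            have h31 : Real.log 3 ≤ 2 := by
              have := Real.log_le_sub_one_of_pos (show (0:ℝ) < 3 by norm_num)
              linarith
            rw [hα, Real.log_rpow hM0]
            linarith
    have hclogR : (Nat.clog 2 P : ℝ) ≤ 1 + 2 * Real.log P := by
      have h1 : ((Nat.clog 2 P : ℝ) - 1) * Real.log 2 ≤ Real.log P := by
        rw [← hcast]; exact hpowR
      have h2 : (0 : ℝ) ≤ (Nat.clog 2 P : ℝ) - 1 := by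
        have : (1 : ℝ) ≤ (Nat.clog 2 P : ℝ) := by exact_mod_cast hclogpos
        linarith
      nlinarith
    have hlogPle : Real.log P ≤ 2 * d + Real.log M := by
      rw [hlogP]
      calc (d : ℝ) * Real.log ((N : ℝ) + 1) ≤ (d : ℝ) * (2 + (1 / d) * Real.log M) :=
            mul_le_mul_of_nonneg_left hlogN (by positivity)
        _ = 2 * d + Real.log M := by field_simp
    have hLR : ((Nat.clog 2 P + 1 : ℕ) : ℝ) ≤ 2 + 4 * d + 2 * Real.log M := by
      push_cast
      linarith
    have h3p : (0 : ℝ) < 3 ^ (d + 1) := by positivity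
    have hcge : (4 : ℝ) * d + 4 ≤ c := by
      rw [hc]
      linarith
    have honelog : (0 : ℝ) ≤ 1 + Real.log M := by linarith
    have hstep : 2 + 4 * (d : ℝ) + 2 * Real.log M ≤ (4 * d + 4) * (1 + Real.log M) := by
      have hpr : (0 : ℝ) ≤ (4 * d + 2) * Real.log M :=
        mul_nonneg (by positivity) hlogM
      nlinarith
    calc ((Nat.clog 2 P + 1 : ℕ) : ℝ) ≤ 2 + 4 * d + 2 * Real.log M := hLR
      _ ≤ (4 * d + 4) * (1 + Real.log M) := hstep
      _ ≤ c * (1 + Real.log M) := mul_le_mul_of_nonneg_right hcge honelog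
  · -- width bound
    have h1 : ((d * ((N + 1) * 2) : ℕ) : ℝ) ≤ c * M := by
      push_cast
      have : ((N : ℝ) + 1) * 2 ≤ 6 * α := by linarith
      calc (d : ℝ) * (((N : ℝ) + 1) * 2) ≤ (d : ℝ) * (6 * α) :=
            mul_le_mul_of_nonneg_left this (by positivity)
        _ = 6 * d * α := by ring
        _ ≤ 6 * d * M := mul_le_mul_of_nonneg_left hαM (by positivity)
        _ ≤ c * M := by
            refine mul_le_mul_of_nonneg_right ?_ hM0.le
            rw [hc]
            have h3p : (0 : ℝ) < 3 ^ (d + 1) := by positivity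
            linarith
    have h2 : ((3 * (N + 1) ^ d : ℕ) : ℝ) ≤ c * M := by
      push_cast
      have hp : ((N : ℝ) + 1) ^ d ≤ (3 * α) ^ d := by
        refine pow_le_pow_left₀ (by positivity) hN3α d
      calc (3 : ℝ) * ((N : ℝ) + 1) ^ d ≤ 3 * (3 * α) ^ d :=
            mul_le_mul_of_nonneg_left hp (by norm_num)
        _ = 3 * (3 ^ d * α ^ d) := by rw [mul_pow]
        _ = 3 ^ (d + 1) * (M : ℝ) := by rw [hαd, pow_succ]; ring
        _ ≤ c * M := by
            refine mul_le_mul_of_nonneg_right ?_ hM0.le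
            rw [hc]
            have hd6 : (0 : ℝ) ≤ 6 * d + 4 := by positivity
            linarith
    rw [Nat.cast_max]
    exact max_le h1 h2
  · -- error bound
    intro x hx
    refine (herr x hx).trans ?_
    have hMneg : (M : ℝ) ^ (-(1 / (d : ℝ))) = α⁻¹ := by
      rw [Real.rpow_neg hM0.le, hα]
    rw [hMneg]
    have hinv : 1 / (N : ℝ) ≤ α⁻¹ := by
      rw [one_div]
      exact inv_anti₀ hα0 hNα
    have hαinv : 0 ≤ α⁻¹ := by positivity
    calc 2 * K * (d : ℝ) / N = 2 * K * d * (1 / N) := by ring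
      _ ≤ 2 * K * d * α⁻¹ := mul_le_mul_of_nonneg_left hinv (by positivity)
      _ ≤ (2 * K * d + 1) * α⁻¹ := mul_le_mul_of_nonneg_right (by linarith) hαinv

end
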